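/- Let R₁ and R₂ be two connected components of the solution graph of a Horn relation R, with coordinate-wise minimum solutions u and v respectively, and let U, V be the sets of 1-coordinates of u and v. If U ⊊ V, then no vector a ∈ R₁ has all coordinates in V equal to 1. -/
import Mathlib


def Reach {ι : Type*} [Fintype ι] (S : Set (ι → Bool)) : (ι → Bool) → (ι → Bool) → Prop :=
  Relation.ReflTransGen (fun u v => u ∈ S ∧ v ∈ S ∧ hammingDist u v = 1)

theorem horn_component_minima_strict_subset (n : ℕ) (R : Set (Fin n → Bool))
    (hHorn : ∀ a ∈ R, ∀ b ∈ R, (fun i => a i && b i) ∈ R)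
    (u v : Fin n → Bool) (hu : u ∈ R) (hv : v ∈ R)
    -- u and v are the minimum solutions of their respective components
    (huMin : ∀ b ∈ R, Reach R u b → u ≤ b)
    (hvMin : ∀ b ∈ R, Reach R v b → v ≤ b)
    -- the components are distinct
    (hdiff : ¬ Reach R u v)
    -- U ⊊ V
    (hUV : {i | u i = true} ⊂ {i | v i = true}) :
    ∀ a ∈ R, Reach R u a → ¬ (∀ i, v i = true → a i = true) := by
  intro a ha hra hall
  apply hdiff
  have huv : (fun i => u i && v i) = u := by
    funext i
    cases h : u i with
    | false => simp
    | true => simp only [h, Bool.true_and]; exact hUV.1 h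
  have hav : (fun i => a i && v i) = v := by
    funext i
    cases h : v i with
    | false => simp
    | true => simp [hall i h]
  have key : ∀ b, Reach R u b → Reach R (fun i => u i && v i) (fun i => b i && v i) := by
    intro b hb
    induction hb with
    | refl => exact Relation.ReflTransGen.refl
    | tail hwx hstep ih =>
      rename_i w x
      obtain ⟨hwR, hxR, hd⟩ := hstep
      have hwv : (fun i => w i && v i) ∈ R := hHorn w hwR v hv
      have hxv : (fun i => x i && v i) ∈ R := hHorn x hxR v hv
      have hle : hammingDist (fun i => w i && v i) (fun i => x i && v i) ≤ 1 := by
        rw [← hd]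
        unfold hammingDist
        apply Finset.card_le_card
        intro i hi
        simp only [Finset.mem_filter, Finset.mem_univ, true_and] at hi ⊢
        intro h
        exact hi (by rw [h])
      rcases Nat.le_one_iff_eq_zero_or_eq_one.mp hle with h0 | h1
      · rwa [eq_of_hammingDist_eq_zero h0] at ih
      · exact ih.tail ⟨hwv, hxv, h1⟩
  have := key a hra
  rwa [huv, hav] at this
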